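/- Let S be a nonempty multiplicatively closed subset of a commutative semiring R, and let P be a k-ideal of R that is maximal, with respect to inclusion, among all k-ideals of R disjoint from S. Then P is a k-prime ideal of R. -/
import Mathlib


variable {R : Type*} [CommSemiring R]

/-- An ideal `I` of a commutative semiring is a *k-ideal* (subtractive ideal) if
`a ∈ I` and `a + b ∈ I` imply `b ∈ I`. -/
def IsKIdeal (I : Ideal R) : Prop :=
  ∀ a b : R, a ∈ I → a + b ∈ I → b ∈ I

/-- A *k-prime* ideal: a proper k-ideal `P` such that for all k-ideals `I`, `J`,
`I * J ≤ P` implies `I ≤ P` or `J ≤ P`. -/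
def IsKPrime (P : Ideal R) : Prop :=
  IsKIdeal P ∧ P ≠ ⊤ ∧
    ∀ I J : Ideal R, IsKIdeal I → IsKIdeal J → I * J ≤ P → I ≤ P ∨ J ≤ P

/-- k-closure of an ideal. -/
def kcl (A : Ideal R) : Ideal R where
  carrier := {x | ∃ a ∈ A, x + a ∈ A}
  zero_mem' := ⟨0, A.zero_mem, by simp⟩
  add_mem' := by
    rintro x y ⟨a, ha, hxa⟩ ⟨b, hb, hyb⟩
    exact ⟨a + b, A.add_mem ha hb, by
      have := A.add_mem hxa hyb
      convert this using 1; ring⟩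
  smul_mem' := by
    rintro r x ⟨a, ha, hxa⟩
    exact ⟨r * a, A.mul_mem_left r ha, by
      have := A.mul_mem_left r hxa
      simpa [mul_add] using this⟩

lemma le_kcl (A : Ideal R) : A ≤ kcl A :=
  fun x hx => ⟨x, hx, A.add_mem hx hx⟩

lemma kcl_isKIdeal (A : Ideal R) : IsKIdeal (kcl A) := by
  rintro x y ⟨a, ha, hxa⟩ ⟨b, hb, hxyb⟩
  refine ⟨x + a + b, A.add_mem hxa hb, ?_⟩
  have : y + (x + a + b) = (x + y + b) + a := by ring
  rw [this]
  exact A.add_mem hxyb ha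

lemma kcl_le_of_kideal {A B : Ideal R} (hB : IsKIdeal B) (h : A ≤ B) : kcl A ≤ B := by
  rintro x ⟨a, ha, hxa⟩
  exact hB a x (h ha) (by rw [add_comm]; exact h hxa)

lemma kcl_mul_mem {A B : Ideal R} {x y : R} (hx : x ∈ kcl A) (hy : y ∈ kcl B) :
    x * y ∈ kcl (A * B) := by
  obtain ⟨a, ha, hxa⟩ := hx
  obtain ⟨b, hb, hyb⟩ := hy
  refine ⟨(x + a) * b + a * (y + b), Ideal.add_mem _ (Ideal.mul_mem_mul hxa hb)
    (Ideal.mul_mem_mul ha hyb), ?_⟩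
  have : x * y + ((x + a) * b + a * (y + b)) = (x + a) * (y + b) + a * b := by ring
  rw [this]
  exact Ideal.add_mem _ (Ideal.mul_mem_mul hxa hyb) (Ideal.mul_mem_mul ha hb)

/-- If `S` is a nonempty multiplicatively closed subset of `R` and `P` is a k-ideal
maximal among k-ideals disjoint from `S`, then `P` is k-prime. -/
theorem kPrime_of_maximal_disjoint (S : Set R) (hS : S.Nonempty)
    (hmul : ∀ a ∈ S, ∀ b ∈ S, a * b ∈ S)
    (P : Ideal R) (hP : IsKIdeal P) (hdisj : (P : Set R) ∩ S = ∅)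
    (hmax : ∀ Q : Ideal R, IsKIdeal Q → (Q : Set R) ∩ S = ∅ → P ≤ Q → P = Q) :
    IsKPrime P := by
  have hout : ∀ x, x ∈ P → x ∉ S := by
    intro x hx hxS
    exact Set.eq_empty_iff_forall_notMem.mp hdisj x ⟨hx, hxS⟩
  refine ⟨hP, ?_, ?_⟩
  · intro htop
    obtain ⟨s, hs⟩ := hS
    exact hout s (htop ▸ trivial) hs
  intro I J _ _ hIJ
  by_contra h
  push_neg at h
  obtain ⟨hI, hJ⟩ := h
  obtain ⟨a, haI, haP⟩ := Set.not_subset.mp hI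
  obtain ⟨b, hbJ, hbP⟩ := Set.not_subset.mp hJ
  -- enlarged k-ideals
  set A := kcl (P ⊔ Ideal.span {a}) with hA
  set B := kcl (P ⊔ Ideal.span {b}) with hB
  have hPA : P ≤ A := le_trans le_sup_left (le_kcl _)
  have hPB : P ≤ B := le_trans le_sup_left (le_kcl _)
  -- A and B each meet S
  have hAS : ∃ s ∈ S, s ∈ A := by
    by_contra hc
    push_neg at hc
    have : P = A := hmax A (kcl_isKIdeal _)
      (Set.eq_empty_iff_forall_notMem.mpr (fun x ⟨hxA, hxS⟩ => hc x hxS hxA)) hPA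
    exact haP (this ▸ (le_kcl _ (Ideal.mem_sup_right (Ideal.subset_span rfl))))
  have hBS : ∃ t ∈ S, t ∈ B := by
    by_contra hc
    push_neg at hc
    have : P = B := hmax B (kcl_isKIdeal _)
      (Set.eq_empty_iff_forall_notMem.mpr (fun x ⟨hxB, hxS⟩ => hc x hxS hxB)) hPB
    exact hbP (this ▸ (le_kcl _ (Ideal.mem_sup_right (Ideal.subset_span rfl))))
  obtain ⟨s, hsS, hsA⟩ := hAS
  obtain ⟨t, htS, htB⟩ := hBS
  -- (P ⊔ ⟨a⟩)(P ⊔ ⟨b⟩) ≤ P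
  have hprod : (P ⊔ Ideal.span {a}) * (P ⊔ Ideal.span {b}) ≤ P := by
    rw [Ideal.mul_le]
    intro r hr s hs
    obtain ⟨p, hp, x, hx, rfl⟩ := Submodule.mem_sup.mp hr
    obtain ⟨q, hq, y, hy, rfl⟩ := Submodule.mem_sup.mp hs
    have hxy : x * y ∈ P := by
      obtain ⟨c, rfl⟩ := Ideal.mem_span_singleton'.mp hx
      obtain ⟨d, rfl⟩ := Ideal.mem_span_singleton'.mp hy
      have : c * a * (d * b) = (c * d) * (a * b) := by ring
      rw [this]
      exact P.mul_mem_left _ (hIJ (Ideal.mul_mem_mul haI hbJ))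
    have heq : (p + x) * (q + y) = p * (q + y) + q * x + x * y := by ring
    rw [heq]
    exact P.add_mem (P.add_mem (P.mul_mem_right _ hp) (P.mul_mem_right _ hq)) hxy
  have hst : s * t ∈ P := by
    have h1 : s * t ∈ kcl ((P ⊔ Ideal.span {a}) * (P ⊔ Ideal.span {b})) :=
      kcl_mul_mem hsA htB
    exact kcl_le_of_kideal hP hprod h1
  exact hout _ hst (hmul s hsS t htS)
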